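/- arXiv:2412.16586 — 4 statements merged into one kernel-verified Lean document; each statement's English description precedes it below -/
import Mathlib

section
/- Let v ∈ ℝⁿ₊ with coordinates sorted as v_{s₁} ≤ ⋯ ≤ v_{sₙ}. If S is a weak (k, ε)-approximate minimum index set for v with k ∈ [n−1], and a_{k+1} ∈ [n] − S satisfies v_{a_{k+1}} ≤ v_{s_{k+1}} + ε, then S ∪ {a_{k+1}} is a weak (k+1, ε)-approximate minimum index set for v. -/
/-- `S` is a weak `(k, ε)`-approximate minimum index set for `v`, where `s` is a
permutation sorting the coordinates of `v` in nondecreasing order. -/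
def WeakApproxMinSet {n : ℕ} (k : ℕ) (hk : k ≤ n) (v : Fin n → ℝ)
    (s : Equiv.Perm (Fin n)) (ε : ℝ) (S : Finset (Fin n)) : Prop :=
  S.card = k ∧ ∃ e : Fin k → Fin n, Function.Injective e ∧
    Finset.image e Finset.univ = S ∧
    ∀ j : Fin k, v (s (Fin.castLE hk j)) ≤ v (e j) ∧ v (e j) ≤ v (s (Fin.castLE hk j)) + ε

/-- Pigeonhole: a finset of `Fin m` with more than `j` elements contains one with value `≥ j`. -/
lemma exists_ge_of_card {m j : ℕ} (B : Finset (Fin m)) (hB : j + 1 ≤ B.card) :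
    ∃ b ∈ B, j ≤ (b : ℕ) := by
  by_contra h
  push_neg at h
  have hsub : B.image Fin.val ⊆ Finset.range j := by
    intro x hx
    simp only [Finset.mem_image] at hx
    obtain ⟨b, hb, rfl⟩ := hx
    exact Finset.mem_range.mpr (h b hb)
  have h1 : (B.image Fin.val).card = B.card :=
    Finset.card_image_of_injective _ Fin.val_injective
  have := Finset.card_le_card hsub
  simp [h1] at this
  omega

theorem weak_error_tolerant_incrementability {n k : ℕ} (hk1 : 1 ≤ k) (hkn : k + 1 ≤ n)
    (v : Fin n → ℝ) (hv : ∀ i, 0 ≤ v i)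
    (s : Equiv.Perm (Fin n)) (hs : Monotone (v ∘ s)) (ε : ℝ) (hε : 0 < ε)
    (S : Finset (Fin n)) (hS : WeakApproxMinSet k (by omega) v s ε S)
    (a : Fin n) (ha : a ∉ S)
    (hval : v a ≤ v (s ⟨k, by omega⟩) + ε) :
    WeakApproxMinSet (k + 1) hkn v s ε (insert a S) := by
  obtain ⟨hcard, e, he_inj, he_img, he_bd⟩ := hS
  set g : Fin (k + 1) → Fin n := Fin.snoc e a with hg
  have hglast : g (Fin.last k) = a := Fin.snoc_last _ _
  have hgcast : ∀ i : Fin k, g (Fin.castSucc i) = e i := fun i => Fin.snoc_castSucc _ _ _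
  have hg_inj : Function.Injective g := by
    intro i j hij
    induction i using Fin.lastCases with
    | last =>
      induction j using Fin.lastCases with
      | last => rfl
      | cast j =>
        rw [hglast, hgcast] at hij
        exfalso; apply ha; rw [← he_img, hij]
        exact Finset.mem_image_of_mem _ (Finset.mem_univ _)
    | cast i =>
      induction j using Fin.lastCases with
      | last =>
        rw [hglast, hgcast] at hij
        exfalso; apply ha; rw [← he_img, ← hij]
        exact Finset.mem_image_of_mem _ (Finset.mem_univ _)
      | cast j =>
        rw [hgcast, hgcast] at hij
        exact congrArg Fin.castSucc (he_inj hij)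
  -- per-element upper bound for g
  have hgub : ∀ i : Fin (k + 1), v (g i) ≤ v (s (Fin.castLE hkn i)) + ε := by
    intro i
    induction i using Fin.lastCases with
    | last =>
      rw [hglast]
      have : (Fin.castLE hkn (Fin.last k)) = (⟨k, by omega⟩ : Fin n) := rfl
      rw [this]; exact hval
    | cast i =>
      rw [hgcast]
      have : Fin.castLE hkn (Fin.castSucc i) = Fin.castLE (by omega) i := rfl
      rw [this]
      exact (he_bd i).2
  -- sort g by value
  set σ : Equiv.Perm (Fin (k + 1)) := Tuple.sort (v ∘ g) with hσ
  have hmono : Monotone (v ∘ g ∘ σ) := Tuple.monotone_sort (v ∘ g)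
  refine ⟨?_, g ∘ σ, hg_inj.comp σ.injective, ?_, ?_⟩
  · rw [Finset.card_insert_of_notMem ha, hcard]
  · -- image
    have h1 : Finset.image (g ∘ σ) Finset.univ = Finset.image g Finset.univ := by
      rw [← Finset.image_image]
      congr 1
      exact Finset.image_univ_equiv σ
    rw [h1]
    ext x
    simp only [Finset.mem_image, Finset.mem_univ, true_and, Finset.mem_insert]
    constructor
    · rintro ⟨i, rfl⟩
      induction i using Fin.lastCases with
      | last => left; exact hglast
      | cast i =>
        right; rw [hgcast, ← he_img]
        exact Finset.mem_image_of_mem _ (Finset.mem_univ _)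
    · rintro (rfl | hx)
      · exact ⟨Fin.last k, hglast⟩
      · rw [← he_img] at hx
        simp only [Finset.mem_image, Finset.mem_univ, true_and] at hx
        obtain ⟨i, rfl⟩ := hx
        exact ⟨Fin.castSucc i, hgcast i⟩
  · intro j
    constructor
    · -- lower bound, via pigeonhole on s.symm ∘ g ∘ σ over Iic j
      set B : Finset (Fin n) :=
        (Finset.Iic j).image (fun i => s.symm (g (σ i))) with hB
      have hBcard : (j : ℕ) + 1 ≤ B.card := by
        have hinj : Function.Injective (fun i : Fin (k+1) => s.symm (g (σ i))) :=
          fun i₁ i₂ h => σ.injective (hg_inj (s.symm.injective h))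
        rw [hB, Finset.card_image_of_injective _ hinj, Fin.card_Iic]
      obtain ⟨b, hb, hjb⟩ := exists_ge_of_card B hBcard
      rw [hB] at hb
      simp only [Finset.mem_image, Finset.mem_Iic] at hb
      obtain ⟨i, hij, hbi⟩ := hb
      have h1 : v (s (Fin.castLE hkn j)) ≤ v (s b) := hs hjb
      have h2 : v (s b) = v (g (σ i)) := by rw [← hbi, Equiv.apply_symm_apply]
      have h3 : v (g (σ i)) ≤ v (g (σ j)) := hmono hij
      calc v (s (Fin.castLE hkn j)) ≤ v (s b) := h1
        _ = v (g (σ i)) := h2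
        _ ≤ v (g (σ j)) := h3
    · -- upper bound
      set A : Finset (Fin (k + 1)) :=
        Finset.univ.filter (fun i => v (g i) ≤ v (s (Fin.castLE hkn j)) + ε) with hA
      have hIic : Finset.Iic j ⊆ A := by
        intro i hi
        rw [Finset.mem_Iic] at hi
        rw [hA, Finset.mem_filter]
        refine ⟨Finset.mem_univ _, le_trans (hgub i) ?_⟩
        have : v (s (Fin.castLE hkn i)) ≤ v (s (Fin.castLE hkn j)) := hs hi
        linarith
      set B : Finset (Fin (k + 1)) := A.image σ.symm with hB
      have hBcard : (j : ℕ) + 1 ≤ B.card := by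
        rw [hB, Finset.card_image_of_injective _ σ.symm.injective]
        calc (j : ℕ) + 1 = (Finset.Iic j).card := (Fin.card_Iic j).symm
          _ ≤ A.card := Finset.card_le_card hIic
      obtain ⟨b, hb, hjb⟩ := exists_ge_of_card B hBcard
      rw [hB] at hb
      simp only [Finset.mem_image] at hb
      obtain ⟨i, hiA, hbi⟩ := hb
      rw [hA, Finset.mem_filter] at hiA
      have h1 : v (g (σ j)) ≤ v (g (σ b)) := hmono hjb
      have h2 : σ b = i := by rw [← hbi, Equiv.apply_symm_apply]
      rw [h2] at h1
      exact le_trans h1 hiA.2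
end

section
/- For every constant c ≥ 1 there exist n, k, ε > 0, and a vector v ∈ ℝⁿ₊ together with a set S ⊆ [n] of size k, such that S is a weak (k, ε)-approximate minimum index set for v but S is not a strong (k, cε)-approximate minimum index set for v. -/
/-- `S` is a strong `(k, ε)`-approximate minimum index set for `v`. -/
def StrongApproxMinSet {n : ℕ} (k : ℕ) (v : Fin n → ℝ) (ε : ℝ) (S : Finset (Fin n)) : Prop :=
  S.card = k ∧ ∀ j ∉ S, ∀ i ∈ S, v i ≤ v j + ε

/-- For every constant `c ≥ 1` there is a nonnegative vector `v`, a precision `ε > 0`,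
and a set `S` of size `k` that is a weak `(k, ε)`-approximate minimum index set for `v`
but not a strong `(k, cε)`-approximate minimum index set for `v`. -/
theorem weak_not_strong (c : ℝ) (hc : 1 ≤ c) :
    ∃ (n k : ℕ) (hk : k ≤ n) (ε : ℝ) (_ : 0 < ε) (v : Fin n → ℝ)
      (_ : ∀ i, 0 ≤ v i) (s : Equiv.Perm (Fin n)) (_ : Monotone (v ∘ s))
      (S : Finset (Fin n)),
      WeakApproxMinSet k hk v s ε S ∧ ¬ StrongApproxMinSet k v (c * ε) S := by
  set k : ℕ := ⌈c⌉₊ + 1 with hkdef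
  have hck : c < (k : ℕ) := lt_of_le_of_lt (Nat.le_ceil c) (by exact_mod_cast Nat.lt_succ_self _)
  refine ⟨k + 1, k, Nat.le_succ k, 1, one_pos, fun i => (i : ℝ),
    fun i => by positivity, 1, ?_, Finset.image Fin.succ Finset.univ, ?_, ?_⟩
  · intro a b hab
    simp only [Function.comp, Equiv.Perm.one_apply]
    exact Nat.cast_le.mpr hab
  · refine ⟨?_, Fin.succ, Fin.succ_injective _, rfl, ?_⟩
    · rw [Finset.card_image_of_injective _ (Fin.succ_injective _)]
      simp
    · intro j
      simp only [Equiv.Perm.one_apply, Fin.coe_castLE, Fin.val_succ]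
      constructor
      · exact_mod_cast Nat.le_succ _
      · push_cast; linarith
  · rintro ⟨-, h⟩
    have h0 : (0 : Fin (k + 1)) ∉ Finset.image Fin.succ Finset.univ := by
      simp [Fin.succ_ne_zero, eq_comm]
    have hlast : Fin.last k ∈ Finset.image Fin.succ Finset.univ := by
      rcases Nat.exists_eq_add_of_le (Nat.one_le_iff_ne_zero.mpr (by omega) : 1 ≤ k) with ⟨m, hm⟩
      refine Finset.mem_image.mpr ⟨Fin.last (k - 1) , Finset.mem_univ _, ?_⟩
      ext; simp; omega
    have := h 0 h0 (Fin.last k) hlast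
    simp only [Fin.val_last, Fin.val_zero] at this
    push_cast at this
    have hce := Nat.le_ceil c
    linarith
end

section
/- Let v ∈ ℝⁿ₊ with coordinates sorted as v_{s₁} ≤ ⋯ ≤ v_{sₙ}, let k ∈ [n], and suppose a sequence a₁, …, a_k of distinct indices is produced where at the j-th step (j = 1, …, k), the index a_j ∈ [n] − {a₁, …, a_{j−1}} satisfies v_{a_j} ≤ w_j + ε, where w_j is the (k−j+1)-th smallest value among the coordinates of v with indices in [n] − {a₁, …, a_{j−1}}. Then {a₁, …, a_k} is a weak (k, ε)-approximate minimum index set for v. -/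
lemma sorted_getD_le (l : List ℝ) (hl : l.Pairwise (· ≤ ·)) (r : ℕ) (c : ℝ)
    (h : r + 1 ≤ l.countP (fun x => decide (x ≤ c))) : l.getD r 0 ≤ c := by
  have hlen : r < l.length := lt_of_lt_of_le (Nat.lt_of_lt_of_le (Nat.lt_succ_self r) h)
    (List.countP_le_length)
  rw [List.getD_eq_getElem l 0 hlen]
  by_contra hgt
  push_neg at hgt
  have hdrop : l.countP (fun x => decide (x ≤ c)) =
      (l.take r).countP (fun x => decide (x ≤ c)) + (l.drop r).countP (fun x => decide (x ≤ c)) := by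
    conv_lhs => rw [← List.take_append_drop r l]
    rw [List.countP_append]
  have h0 : (l.drop r).countP (fun x => decide (x ≤ c)) = 0 := by
    rw [List.countP_eq_zero]
    intro x hx
    simp only [decide_eq_true_eq]
    push_neg
    obtain ⟨i, hi, rfl⟩ := List.getElem_of_mem hx
    have hri : r + i < l.length := by
      have := List.length_drop (i := r) (l := l); omega
    have hdg : (l.drop r)[i] = l[r + i]'hri := List.getElem_drop (xs := l)
    rw [hdg]
    calc c < l[r] := hgt
      _ ≤ l[r + i]'hri := by
        rcases Nat.eq_or_lt_of_le (Nat.le_add_right r i) with he | hlt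
        · have hri0 : r + i = r := by omega
          exact le_of_eq (by simp only [hri0])
        · exact List.pairwise_iff_getElem.mp hl r (r+i) hlen hri hlt
  have h1 : (l.take r).countP (fun x => decide (x ≤ c)) ≤ r :=
    le_trans (List.countP_le_length) (by simp)
  omega

lemma kth_le {n : ℕ} (T : Finset (Fin n)) (v : Fin n → ℝ) (r : ℕ) (c : ℝ)
    (h : r + 1 ≤ (T.filter (fun i => v i ≤ c)).card) :
    (((T.val.map v).sort (· ≤ ·)).getD r 0 : ℝ) ≤ c := by
  apply sorted_getD_le _ (Multiset.pairwise_sort _ _)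
  have h1 : (((T.val.map v).sort (· ≤ ·)) : Multiset ℝ).countP (fun x => x ≤ c) =
      (((T.val.map v).sort (· ≤ ·))).countP (fun x => decide (x ≤ c)) :=
    Multiset.coe_countP _ _
  rw [← h1, Multiset.sort_eq, Multiset.countP_map]
  have h2 : Multiset.countP (fun a => v a ≤ c) T.val = (T.filter (fun i => v i ≤ c)).card := by
    rw [Multiset.countP_eq_card_filter]; rfl
  exact h

/-- a linear-order-like relation sorting indices by value, ties broken by index -/
def vOrd {n : ℕ} (v : Fin n → ℝ) (i j : Fin n) : Prop :=
  v i < v j ∨ (v i = v j ∧ i ≤ j)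

noncomputable instance {n : ℕ} (v : Fin n → ℝ) : DecidableRel (vOrd v) := fun i j => by
  unfold vOrd; infer_instance

instance {n : ℕ} (v : Fin n → ℝ) : IsTrans (Fin n) (vOrd v) := by
  constructor
  rintro a b c (h1 | ⟨h1, h1'⟩) (h2 | ⟨h2, h2'⟩)
  · exact Or.inl (h1.trans h2)
  · exact Or.inl (h2 ▸ h1)
  · exact Or.inl (h1 ▸ h2)
  · exact Or.inr ⟨h1.trans h2, h1'.trans h2'⟩

instance {n : ℕ} (v : Fin n → ℝ) : IsAntisymm (Fin n) (vOrd v) := by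
  constructor
  rintro a b (h1 | ⟨h1, h1'⟩) (h2 | ⟨h2, h2'⟩)
  · exact absurd h2 (not_lt.mpr h1.le)
  · exact absurd h1 (not_lt.mpr h2.le)
  · exact absurd h2 (not_lt.mpr h1.le)
  · exact le_antisymm h1' h2'

instance {n : ℕ} (v : Fin n → ℝ) : IsTotal (Fin n) (vOrd v) := by
  constructor
  intro a b
  rcases lt_trichotomy (v a) (v b) with h | h | h
  · exact Or.inl (Or.inl h)
  · rcases le_total a b with h' | h'
    · exact Or.inl (Or.inr ⟨h, h'⟩)
    · exact Or.inr (Or.inr ⟨h.symm, h'⟩)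
  · exact Or.inr (Or.inl h)

lemma vOrd_le {n : ℕ} {v : Fin n → ℝ} {i j : Fin n} (h : vOrd v i j) : v i ≤ v j := by
  rcases h with h | ⟨h, _⟩
  · exact h.le
  · exact h.le

lemma card_filter_coe_lt (k m : ℕ) (hm : m ≤ k) :
    (Finset.univ.filter fun m' : Fin k => (m' : ℕ) < m).card = m := by
  have : (Finset.univ.filter fun m' : Fin k => (m' : ℕ) < m)
      = Finset.image (Fin.castLE hm) Finset.univ := by
    ext x
    simp only [Finset.mem_filter, Finset.mem_univ, true_and, Finset.mem_image]
    constructor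
    · intro hx; exact ⟨⟨(x : ℕ), hx⟩, rfl⟩
    · rintro ⟨y, rfl⟩; exact y.isLt
  rw [this, Finset.card_image_of_injective _ (Fin.castLE_injective hm)]
  simp


/-- The `(r+1)`-th smallest value (0-based rank `r`) among the coordinates of `v`
with indices in `T`. -/
noncomputable def kthSmallest {n : ℕ} (T : Finset (Fin n)) (v : Fin n → ℝ) (r : ℕ) : ℝ :=
  ((T.val.map v).sort (· ≤ ·)).getD r 0

/-- Algorithmic construction of a weak approximate minimum index set: at step `j`
(0-based; step `j+1` in 1-based terms) an index `a j`, not chosen before, is found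
whose value is at most `ε` more than the `(k−j)`-th smallest (1-based) value among
the not-yet-chosen coordinates.  Then `{a 0, …, a (k−1)}` is a weak
`(k, ε)`-approximate minimum index set for `v`. -/
theorem weak_algorithmic_construction {n k : ℕ} (hk : k ≤ n)
    (v : Fin n → ℝ) (hv : ∀ i, 0 ≤ v i)
    (s : Equiv.Perm (Fin n)) (hs : Monotone (v ∘ s)) (ε : ℝ) (hε : 0 < ε)
    (a : Fin k → Fin n) (ha : Function.Injective a)
    (hstep : ∀ j : Fin k,
      v (a j) ≤ kthSmallest
        (Finset.univ \ Finset.image a (Finset.univ.filter fun m : Fin k => m < j))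
        v (k - 1 - (j : ℕ)) + ε) :
    WeakApproxMinSet k hk v s ε (Finset.image a Finset.univ) := by
  classical
  set A := Finset.image a Finset.univ with hA
  have hAcard : A.card = k := by
    rw [hA, Finset.card_image_of_injective _ ha, Finset.card_univ, Fintype.card_fin]
  set l := A.sort (vOrd v) with hldef
  have hlsort : l.Pairwise (vOrd v) := Finset.pairwise_sort _ _
  have hlnodup : l.Nodup := Finset.sort_nodup _ _
  have hlmem : ∀ x, x ∈ l ↔ x ∈ A := fun x => Finset.mem_sort _
  have hllen : l.length = k := by rw [hldef, Finset.length_sort, hAcard]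
  set e : Fin k → Fin n := fun j => l.get (Fin.cast hllen.symm j) with he
  have heinj : Function.Injective e :=
    (List.nodup_iff_injective_get.mp hlnodup).comp (Fin.cast_injective _)
  have heA : ∀ j, e j ∈ A := fun j => (hlmem _).mp (List.get_mem l _)
  have heimg : Finset.image e Finset.univ = A := by
    apply Finset.eq_of_subset_of_card_le
    · intro x hx
      obtain ⟨j, _, rfl⟩ := Finset.mem_image.mp hx
      exact heA j
    · rw [hAcard, Finset.card_image_of_injective _ heinj, Finset.card_univ, Fintype.card_fin]
  have hmono : ∀ m j : Fin k, m ≤ j → v (e m) ≤ v (e j) := by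
    intro m j hmj
    rcases eq_or_lt_of_le hmj with h | h
    · rw [h]
    · exact vOrd_le (List.Pairwise.rel_get_of_lt hlsort h)
  -- the main counting claim
  have main : ∀ j : Fin k,
      (j : ℕ) + 1 ≤ (A.filter (fun i => v i ≤ v (s (Fin.castLE hk j)) + ε)).card := by
    intro j
    set c0 := v (s (Fin.castLE hk j)) with hc0
    set L := Finset.univ.filter (fun i => v i ≤ c0) with hL
    have hjn : (j : ℕ) + 1 ≤ n := le_trans j.isLt hk
    have hLcard : (j : ℕ) + 1 ≤ L.card := by
      have hmaps : ∀ m : Fin ((j : ℕ) + 1), s (Fin.castLE hjn m) ∈ L := by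
        intro m
        refine Finset.mem_filter.mpr ⟨Finset.mem_univ _, ?_⟩
        rw [hc0]
        exact hs (show Fin.castLE hjn m ≤ Fin.castLE hk j from
          by simp [Fin.le_def, Nat.lt_succ_iff.mp m.isLt])
      have := Finset.card_le_card_of_injOn
        (s := (Finset.univ : Finset (Fin ((j : ℕ) + 1)))) (t := L)
        (fun m => s (Fin.castLE hjn m))
        (fun m _ => hmaps m)
        (fun m1 _ m2 _ h12 => Fin.castLE_injective hjn (s.injective h12))
      simpa using this
    set R : ℕ → Finset (Fin n) :=
      fun m => Finset.image a (Finset.univ.filter fun m' : Fin k => (m' : ℕ) < m) with hR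
    set C : ℕ → Finset (Fin n) := fun m => (R m).filter (fun i => v i ≤ c0 + ε) with hC
    have hRcard : ∀ m ≤ k, (R m).card = m := by
      intro m hm
      rw [hR, Finset.card_image_of_injective _ ha, card_filter_coe_lt k m hm]
    have hCmono : ∀ m, C m ⊆ C (m + 1) := by
      intro m
      apply Finset.filter_subset_filter
      apply Finset.image_subset_image
      intro x hx
      simp only [Finset.mem_filter, Finset.mem_univ, true_and] at hx ⊢
      omega
    have inv : ∀ m, m ≤ k → m ≤ (k - L.card) + (C m).card := by
      intro m
      induction m with
      | zero => intro _; exact Nat.zero_le _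
      | succ m ih =>
        intro hm1
        have hm : m < k := hm1
        have ihm := ih (le_of_lt hm)
        have hsub : (C m).card ≤ (C (m + 1)).card := Finset.card_le_card (hCmono m)
        by_cases hgood : v (a ⟨m, hm⟩) ≤ c0 + ε
        · have hnot : a ⟨m, hm⟩ ∉ C m := by
            intro hmem
            have hmem' : a ⟨m, hm⟩ ∈ R m := Finset.mem_of_mem_filter _ hmem
            obtain ⟨m', hm', heq⟩ := Finset.mem_image.mp hmem'
            have hme : m' = ⟨m, hm⟩ := ha heq
            rw [hme] at hm'
            have : (m : ℕ) < m := by simpa using (Finset.mem_filter.mp hm').2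
            omega
          have hins : insert (a ⟨m, hm⟩) (C m) ⊆ C (m + 1) := by
            intro x hx
            rcases Finset.mem_insert.mp hx with rfl | hx
            · refine Finset.mem_filter.mpr ⟨?_, hgood⟩
              exact Finset.mem_image.mpr ⟨⟨m, hm⟩, by simp, rfl⟩
            · exact hCmono m hx
          have hcard := Finset.card_le_card hins
          rw [Finset.card_insert_of_notMem hnot] at hcard
          omega
        · have hstepm := hstep ⟨m, hm⟩
          have hfeq : (Finset.univ.filter fun m' : Fin k => m' < (⟨m, hm⟩ : Fin k))
              = Finset.univ.filter fun m' : Fin k => (m' : ℕ) < m := by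
            ext m'
            simp [Fin.lt_def]
          rw [hfeq] at hstepm
          have hcount : ¬ ((k - 1 - m) + 1 ≤
              ((Finset.univ \ R m).filter (fun i => v i ≤ c0)).card) := by
            intro hc
            have hkth := kth_le (Finset.univ \ R m) v (k - 1 - m) c0 hc
            have : kthSmallest (Finset.univ \ R m) v (k - 1 - m) ≤ c0 := hkth
            exact hgood (le_trans hstepm (by linarith))
          push_neg at hcount
          have hset : (Finset.univ \ R m).filter (fun i => v i ≤ c0) = L \ R m := by
            ext x
            simp only [Finset.mem_filter, Finset.mem_sdiff, Finset.mem_univ, true_and, hL]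
            tauto
          rw [hset] at hcount
          have hsd := Finset.card_sdiff_add_card_inter L (R m)
          have hLC : L ∩ R m ⊆ C m := by
            intro x hx
            obtain ⟨hxL, hxR⟩ := Finset.mem_inter.mp hx
            have hxv : v x ≤ c0 := by simpa [hL] using (Finset.mem_filter.mp hxL).2
            exact Finset.mem_filter.mpr ⟨hxR, by linarith⟩
          have hLCc := Finset.card_le_card hLC
          omega
    have hCk : C k = A.filter (fun i => v i ≤ c0 + ε) := by
      have hRk : R k = A := by
        rw [hR, hA]
        congr 1
        ext m'
        simp [m'.isLt]
      show (R k).filter (fun i => v i ≤ c0 + ε) = A.filter (fun i => v i ≤ c0 + ε)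
      rw [hRk]
    have := inv k le_rfl
    rw [hCk] at this
    omega
  refine ⟨hAcard, e, heinj, heimg, fun j => ⟨?_, ?_⟩⟩
  · -- lower bound
    by_contra h
    push_neg at h
    have hjk : (j : ℕ) + 1 ≤ k := j.isLt
    have key : ∀ m : Fin ((j : ℕ) + 1), (s.symm (e (Fin.castLE hjk m)) : ℕ) < (j : ℕ) := by
      intro m
      have h1 : v (e (Fin.castLE hjk m)) ≤ v (e j) :=
        hmono _ _ (by simp [Fin.le_def, Nat.lt_succ_iff.mp m.isLt])
      by_contra hge
      push_neg at hge
      have : v (s (Fin.castLE hk j)) ≤ v (e (Fin.castLE hjk m)) := by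
        have := hs (show Fin.castLE hk j ≤ s.symm (e (Fin.castLE hjk m)) by
          simp [Fin.le_def, hge])
        simpa using this
      linarith
    set f : Fin ((j : ℕ) + 1) → Fin (j : ℕ) :=
      fun m => ⟨(s.symm (e (Fin.castLE hjk m)) : ℕ), key m⟩ with hf
    have hfinj : Function.Injective f := by
      intro m1 m2 h12
      have hv12 : (s.symm (e (Fin.castLE hjk m1)) : ℕ) = (s.symm (e (Fin.castLE hjk m2)) : ℕ) := by
        have h13 := congrArg Fin.val h12
        exact h13
      exact Fin.castLE_injective hjk (heinj (s.symm.injective (Fin.ext hv12)))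
    have := Fintype.card_le_of_injective f hfinj
    simp at this
  · -- upper bound
    by_contra h
    push_neg at h
    have hmain := main j
    have hsub : A.filter (fun i => v i ≤ v (s (Fin.castLE hk j)) + ε) ⊆
        Finset.image e (Finset.univ.filter fun m : Fin k => (m : ℕ) < (j : ℕ)) := by
      intro x hx
      obtain ⟨hxA, hxv⟩ := Finset.mem_filter.mp hx
      rw [← heimg] at hxA
      obtain ⟨m, _, rfl⟩ := Finset.mem_image.mp hxA
      refine Finset.mem_image.mpr ⟨m, Finset.mem_filter.mpr ⟨Finset.mem_univ _, ?_⟩, rfl⟩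
      by_contra hmj
      push_neg at hmj
      have := hmono j m hmj
      linarith
    have hle := Finset.card_le_card hsub
    rw [Finset.card_image_of_injective _ heinj, card_filter_coe_lt k _ (le_of_lt j.isLt)] at hle
    omega
end

section
/- Let v ∈ ℝⁿ with all entries in [0,1], sorted as v_{s₁} ≤ ⋯ ≤ v_{sₙ}. For each i ∈ [n], let (α_ν^{(i)})_ν be normalized amplitudes supported on ν with |ν − v_i| ≤ ε. Let v_g ∈ [−ε, 1+ε] satisfy v_{s_k} − ε ≤ v_g ≤ v_{s_k} + 3ε, and define a = (1/n) ∑_{i, ν : ν ≤ v_g − 5ε} |α_ν^{(i)}|². Then a ≤ k/n. -/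
open scoped Classical

/-- Amplitude bound for the strong-minimum finding algorithm: if `v_g` is within
`[v_{s_k} − ε, v_{s_k} + 3ε]` and each index `i` carries normalized amplitudes
supported on estimates `ε`-close to `v i`, then the total probability weight of
estimates at most `v_g − 5ε` is at most `k/n`. -/
theorem amplitude_bound_strong_min {n d k : ℕ} (hk1 : 1 ≤ k) (hk : k ≤ n)
    (v : Fin n → ℝ) (hv : ∀ i, v i ∈ Set.Icc (0 : ℝ) 1)
    (s : Equiv.Perm (Fin n)) (hs : Monotone (v ∘ s))
    (ε : ℝ) (hε : ε ∈ Set.Ioo (0 : ℝ) (1 / 2))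
    (ν : Fin d → ℝ) (α : Fin n → Fin d → ℂ)
    (hsupp : ∀ i m, α i m ≠ 0 → |ν m - v i| ≤ ε)
    (hnorm : ∀ i, ∑ m, ‖α i m‖ ^ 2 = 1)
    (vg : ℝ) (hvg : vg ∈ Set.Icc (-ε) (1 + ε))
    (hvgl : v (s ⟨k - 1, by omega⟩) - ε ≤ vg)
    (hvgu : vg ≤ v (s ⟨k - 1, by omega⟩) + 3 * ε) :
    (1 / n) * ∑ i, ∑ m ∈ Finset.univ.filter (fun m => ν m ≤ vg - 5 * ε), ‖α i m‖ ^ 2 ≤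
      (k : ℝ) / n := by
  have hn : 1 ≤ n := le_trans hk1 hk
  set kk : Fin n := ⟨k - 1, by omega⟩
  set S : Finset (Fin n) := Finset.univ.filter (fun i => v i < v (s kk)) with hS
  have hεpos : (0:ℝ) < ε := hε.1
  -- each inner sum ≤ 1
  have hinner_le : ∀ i, ∑ m ∈ Finset.univ.filter (fun m => ν m ≤ vg - 5 * ε), ‖α i m‖ ^ 2 ≤ 1 := by
    intro i
    rw [← hnorm i]
    exact Finset.sum_le_sum_of_subset_of_nonneg (Finset.filter_subset _ _)
      (fun m _ _ => by positivity)
  -- inner sum is 0 outside S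
  have hzero : ∀ i ∉ S, ∑ m ∈ Finset.univ.filter (fun m => ν m ≤ vg - 5 * ε), ‖α i m‖ ^ 2 = 0 := by
    intro i hi
    simp only [hS, Finset.mem_filter, Finset.mem_univ, true_and, not_lt] at hi
    apply Finset.sum_eq_zero
    intro m hm
    simp only [Finset.mem_filter] at hm
    by_contra h
    have hα : α i m ≠ 0 := by
      intro h0; apply h; simp [h0]
    have h1 := hsupp i m hα
    have h2 : v i ≤ ν m + ε := by
      have := abs_le.mp h1; linarith [this.1]
    linarith [hm.2]
  -- the total sum equals the sum over S
  have hsum_eq : ∑ i, ∑ m ∈ Finset.univ.filter (fun m => ν m ≤ vg - 5 * ε), ‖α i m‖ ^ 2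
      = ∑ i ∈ S, ∑ m ∈ Finset.univ.filter (fun m => ν m ≤ vg - 5 * ε), ‖α i m‖ ^ 2 :=
    (Finset.sum_subset (Finset.subset_univ S) (fun i _ hi => hzero i hi)).symm
  -- card S ≤ k - 1
  have hcard : S.card ≤ k - 1 := by
    have hsub : ∀ i ∈ S, s.symm i ∈ Finset.univ.filter (fun j : Fin n => (j : ℕ) < k - 1) := by
      intro i hi
      simp only [hS, Finset.mem_filter, Finset.mem_univ, true_and] at hi ⊢
      by_contra h
      push_neg at h
      have hle : kk ≤ s.symm i := by
        exact Fin.le_def.mpr h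
      have := hs hle
      simp only [Function.comp_apply, Equiv.apply_symm_apply] at this
      linarith
    have hinj : Set.InjOn s.symm S := fun a _ b _ h => s.symm.injective h
    have h1 := Finset.card_le_card_of_injOn _ hsub hinj
    have h2 : (Finset.univ.filter (fun j : Fin n => (j : ℕ) < k - 1)).card = k - 1 := by
      have heq : Finset.univ.filter (fun j : Fin n => (j : ℕ) < k - 1) = Finset.Iio kk := by
        ext j; simp [Fin.lt_def, kk]
      rw [heq, Fin.card_Iio]
    omega
  have hsum_le : ∑ i ∈ S, ∑ m ∈ Finset.univ.filter (fun m => ν m ≤ vg - 5 * ε), ‖α i m‖ ^ 2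
      ≤ (S.card : ℝ) := by
    calc _ ≤ ∑ _i ∈ S, (1:ℝ) := Finset.sum_le_sum (fun i _ => hinner_le i)
    _ = (S.card : ℝ) := by simp
  have hnpos : (0:ℝ) < n := by exact_mod_cast hn
  rw [hsum_eq, one_div, div_eq_inv_mul]
  apply mul_le_mul_of_nonneg_left _ (by positivity)
  calc ∑ i ∈ S, ∑ m ∈ Finset.univ.filter (fun m => ν m ≤ vg - 5 * ε), ‖α i m‖ ^ 2
      ≤ (S.card : ℝ) := hsum_le
    _ ≤ (k : ℝ) := by
        have : S.card ≤ k := le_trans hcard (Nat.sub_le k 1)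
        exact_mod_cast this
end
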